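/- Radial Sobolev inequality: there exists a constant C > 0 depending only on d ≥ 3 such that for every radial function φ ∈ Ḣ¹(ℝ^d), sup_{x≠0} |x|^{d/2−1} |φ(x)| ≤ C ‖∇φ‖_{L²(ℝ^d)}. -/

import Mathlib

open MeasureTheory Real
noncomputable section
abbrev Rd (d : ℕ) := EuclideanSpace ℝ (Fin d)
/-- critical Sobolev exponent 2* = 2d/(d-2) -/
def pstar (d : ℕ) : ℝ := 2*d/((d:ℝ)-2)
/-- Aubin–Talenti ground state -/
def W (d : ℕ) (x : Rd d) : ℝ := (1 + ‖x‖^2 / ((d:ℝ)*((d:ℝ)-2))) ^ (((2:ℝ)-d)/2)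
/-- squared homogeneous H^1 norm -/
def gradSq (d : ℕ) (φ : Rd d → ℝ) : ℝ := ∫ x, ‖gradient φ x‖^2
/-- L^{2*} norm to the power 2* -/
def lpP (d : ℕ) (φ : Rd d → ℝ) : ℝ := ∫ x, |φ x| ^ pstar d
/-- virial functional K -/
def Kf (d : ℕ) (φ : Rd d → ℝ) : ℝ := gradSq d φ - lpP d φ
/-- static energy J -/
def Jf (d : ℕ) (φ : Rd d → ℝ) : ℝ := (1/2) * gradSq d φ - (1/(pstar d)) * lpP d φ
/-- Laplacian as sum of second partial derivatives -/
def lap (d : ℕ) (f : Rd d → ℝ) (x : Rd d) : ℝ :=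
  ∑ i : Fin d, fderiv ℝ (fun y => fderiv ℝ f y (EuclideanSpace.single i 1)) x (EuclideanSpace.single i 1)
/-- H^1-invariant dilation T_λ φ(x) = λ^{d/2-1} φ(λ x) -/
def Tdil (d : ℕ) (lam : ℝ) (φ : Rd d → ℝ) (x : Rd d) : ℝ := lam ^ ((d:ℝ)/2 - 1) * φ (lam • x)

open Metric Set in
lemma radial_integrableOn (d : ℕ) (hd : 0 < d) {g : ℝ → ℝ}
    (hint : Integrable (fun x : Rd d => g ‖x‖)) :
    IntegrableOn (fun y => y ^ (d - 1) * g y) (Set.Ioi (0:ℝ)) := by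
  haveI : Nonempty (Fin d) := ⟨⟨0, hd⟩⟩
  haveI : Nontrivial (Rd d) := ⟨⟨EuclideanSpace.single ⟨0, hd⟩ (1:ℝ), 0, by
    intro h
    have := congrArg norm h
    simp [EuclideanSpace.norm_single] at this⟩⟩
  have hdim : Module.finrank ℝ (Rd d) = d := finrank_euclideanSpace_fin
  set μ : Measure (Rd d) := volume with hμ
  have hs : MeasurableSet ({(0:Rd d)}ᶜ) := (measurableSet_singleton _).compl
  have h2 : Integrable ((fun x : Rd d => g ‖x‖) ∘ (Subtype.val : ({(0:Rd d)}ᶜ : Set (Rd d)) → Rd d))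
      (μ.comap Subtype.val) := by
    rw [← (MeasurableEmbedding.subtype_coe hs).integrable_map_iff,
      map_comap_subtype_coe hs]
    exact hint.integrableOn
  have hmp := (μ.measurePreserving_homeomorphUnitSphereProd)
  have h3 : Integrable (fun p : sphere (0:Rd d) 1 × Set.Ioi (0:ℝ) => g p.2.1)
      (μ.toSphere.prod (Measure.volumeIoiPow (Module.finrank ℝ (Rd d) - 1))) :=
    (hmp.integrable_comp_emb (Homeomorph.measurableEmbedding _)).1 (by
      convert h2 using 1; funext p; simp only [Function.comp_apply, homeomorphUnitSphereProd_apply_snd_coe])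
  -- step 4: extract integrability wrt volumeIoiPow
  have hsph : μ.toSphere ≠ 0 := by
    intro h0
    have h1 := Measure.toSphere_apply_univ μ
    rw [h0, hdim] at h1
    simp only [Measure.coe_zero, Pi.zero_apply] at h1
    have hb : 0 < μ (ball (0:Rd d) 1) := measure_ball_pos μ _ one_pos
    have hpos : (0:ENNReal) < d * μ (ball (0:Rd d) 1) :=
      ENNReal.mul_pos (by exact_mod_cast Nat.cast_ne_zero.2 hd.ne') hb.ne'
    exact hpos.ne' h1.symm
  have hae : ∀ᵐ p ∂μ.toSphere,
      Integrable (fun y : Set.Ioi (0:ℝ) => g y.1)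
        (Measure.volumeIoiPow (Module.finrank ℝ (Rd d) - 1)) := h3.prod_right_ae
  obtain ⟨p0, h4⟩ := @Filter.Eventually.exists _ _ _ (MeasureTheory.ae_neBot.2 hsph) hae
  rw [hdim] at h4
  -- step 5: unfold withDensity
  rw [Measure.volumeIoiPow, integrable_withDensity_iff
      ((measurable_subtype_coe.pow_const _).ennreal_ofReal)
      (Filter.Eventually.of_forall fun _ => ENNReal.ofReal_lt_top)] at h4
  have h5 : Integrable (fun y : Set.Ioi (0:ℝ) => ((fun t => t ^ (d-1) * g t) ∘
      (Subtype.val : Set.Ioi (0:ℝ) → ℝ)) y) ((volume : Measure ℝ).comap Subtype.val) := by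
    refine h4.congr (Filter.Eventually.of_forall fun y => ?_)
    have hy : (0:ℝ) ≤ y.1 := (Set.mem_Ioi.mp y.2).le
    simp only [Function.comp_apply, ENNReal.toReal_ofReal (pow_nonneg hy _)]
    ring
  rw [← (MeasurableEmbedding.subtype_coe measurableSet_Ioi).integrable_map_iff,
      map_comap_subtype_coe measurableSet_Ioi] at h5
  exact h5

lemma le_sqrt_mul_sqrt_of_eps {L A c : ℝ} (hL : 0 ≤ L) (hA : 0 ≤ A) (hc : 0 ≤ c)
    (h : ∀ ε : ℝ, 0 < ε → L ≤ (ε * A + c / ε) / 2) : L ≤ Real.sqrt A * Real.sqrt c := by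
  have hnn : 0 ≤ Real.sqrt A * Real.sqrt c := by positivity
  rcases le_or_gt L 0 with hL0 | hL0
  · linarith
  rcases eq_or_lt_of_le hA with hA0 | hA0
  · -- A = 0
    have hb := h ((c + 1) / L) (by positivity)
    rw [← hA0] at hb
    have hcc : c / ((c + 1) / L) = c * L / (c + 1) := by
      field_simp
    rw [hcc] at hb
    have hc1 : (0:ℝ) < c + 1 := by linarith
    simp only [mul_zero, zero_add] at hb
    have hb2 := (le_div_iff₀ hc1).1 (by linarith [hb] : L * 2 ≤ c * L / (c + 1))
    nlinarith [mul_nonneg hL0.le hc]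
  rcases eq_or_lt_of_le hc with hc0 | hc0
  · -- c = 0
    have hb := h (L / A) (by positivity)
    rw [← hc0] at hb
    simp only [zero_div] at hb
    have hLA : (L / A) * A = L := by field_simp
    rw [hLA] at hb
    linarith
  · have hsA : 0 < Real.sqrt A := Real.sqrt_pos.2 hA0
    have hsc : 0 < Real.sqrt c := Real.sqrt_pos.2 hc0
    have hAs : Real.sqrt A * Real.sqrt A = A := Real.mul_self_sqrt hA
    have hcs : Real.sqrt c * Real.sqrt c = c := Real.mul_self_sqrt hc
    have hb := h (Real.sqrt c / Real.sqrt A) (by positivity)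
    have e1 : Real.sqrt c / Real.sqrt A * A = Real.sqrt c * Real.sqrt A := by
      rw [div_mul_eq_mul_div, eq_comm, eq_div_iff hsA.ne']
      linear_combination Real.sqrt c * hAs
    have e2 : c / (Real.sqrt c / Real.sqrt A) = Real.sqrt A * Real.sqrt c := by
      rw [div_div_eq_mul_div, eq_comm, eq_div_iff hsc.ne']
      linear_combination Real.sqrt A * hcs
    rw [e1, e2] at hb
    linarith

open Metric Set in
theorem stmt_5 (d : ℕ) (hd : 3 ≤ d) :
    ∃ C > 0, ∀ φ : Rd d → ℝ,
      (∀ x y : Rd d, ‖x‖ = ‖y‖ → φ x = φ y) →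
      Differentiable ℝ φ →
      Integrable (fun x => ‖gradient φ x‖^2) →
      Filter.Tendsto φ (Filter.cocompact (Rd d)) (nhds 0) →
      ∀ x : Rd d, x ≠ 0 → ‖x‖ ^ ((d:ℝ)/2 - 1) * |φ x| ≤ C * Real.sqrt (gradSq d φ) := by
  have hd0 : 0 < d := by omega
  have hd2 : (0:ℝ) < (d:ℝ) - 2 := by
    have : (3:ℝ) ≤ (d:ℝ) := by exact_mod_cast hd
    linarith
  have hdR : (0:ℝ) < (d:ℝ) := by positivity
  haveI : Nonempty (Fin d) := ⟨⟨0, hd0⟩⟩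
  haveI : Nontrivial (Rd d) := ⟨⟨EuclideanSpace.single ⟨0, hd0⟩ (1:ℝ), 0, by
    intro h
    have := congrArg norm h
    simp [EuclideanSpace.norm_single] at this⟩⟩
  have hdim : Module.finrank ℝ (Rd d) = d := finrank_euclideanSpace_fin
  set v : ℝ := (volume (ball (0: Rd d) 1)).toReal with hv
  have hvpos : 0 < v :=
    ENNReal.toReal_pos (measure_ball_pos _ _ one_pos).ne' measure_ball_lt_top.ne
  refine ⟨1 / (Real.sqrt ((d:ℝ) - 2) * Real.sqrt ((d:ℝ) * v)), by positivity, ?_⟩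
  intro φ hrad hdiff hint hdecay x hx
  set e₀ : Rd d := EuclideanSpace.single ⟨0, hd0⟩ (1:ℝ) with he₀
  have he₀n : ‖e₀‖ = 1 := by simp [he₀, EuclideanSpace.norm_single]
  set f : ℝ → ℝ := fun r => φ (r • e₀) with hf
  -- derivative of f through any unit direction
  have hfd : ∀ (r : ℝ) (u : Rd d), ‖u‖ = 1 → HasDerivAt f (fderiv ℝ φ (r • u) u) r := by
    intro r u hu
    have h1 : HasDerivAt (fun t : ℝ => t • u) u r := by
      simpa using (hasDerivAt_id r).smul_const u
    have h2 : HasDerivAt (fun t => φ (t • u)) (fderiv ℝ φ (r • u) u) r :=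
      ((hdiff (r • u)).hasFDerivAt).comp_hasDerivAt r h1
    have he : (fun t => φ (t • u)) = f := by
      funext t; exact hrad _ _ (by rw [norm_smul, norm_smul, hu, he₀n])
    rwa [he] at h2
  have hderiv_le : ∀ y : Rd d, y ≠ 0 → |deriv f ‖y‖| ≤ ‖gradient φ y‖ := by
    intro y hy
    have hny : (0:ℝ) < ‖y‖ := norm_pos_iff.mpr hy
    set u : Rd d := ‖y‖⁻¹ • y with hu
    have hun : ‖u‖ = 1 := by
      rw [hu, norm_smul, norm_inv, norm_norm, inv_mul_cancel₀ hny.ne']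
    have h3 := hfd ‖y‖ u hun
    have hyy : ‖y‖ • u = y := by rw [hu, smul_smul, mul_inv_cancel₀ hny.ne', one_smul]
    rw [hyy] at h3
    rw [h3.deriv]
    have hig : fderiv ℝ φ y u = @inner ℝ _ _ (gradient φ y) u := by
      rw [gradient, InnerProductSpace.toDual_symm_apply]
    rw [hig]
    calc |@inner ℝ _ _ (gradient φ y) u| ≤ ‖gradient φ y‖ * ‖u‖ := abs_real_inner_le_norm _ _
      _ = ‖gradient φ y‖ := by rw [hun, mul_one]
  -- the profile g and its integrability
  have h0ae : ({(0:Rd d)}ᶜ : Set (Rd d)) ∈ MeasureTheory.ae (volume : Measure (Rd d)) :=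
    compl_mem_ae_iff.2 (measure_singleton _)
  set g : ℝ → ℝ := fun r => (deriv f r)^2 with hg
  have hgbd : ∀ y : Rd d, y ≠ 0 → g ‖y‖ ≤ ‖gradient φ y‖^2 := by
    intro y hy
    have h1 := hderiv_le y hy
    calc g ‖y‖ = |deriv f ‖y‖|^2 := by rw [hg]; simp [sq_abs]
      _ ≤ ‖gradient φ y‖^2 := by
          exact pow_le_pow_left₀ (abs_nonneg _) h1 2
  have hgint : Integrable (fun x : Rd d => g ‖x‖) := by
    refine hint.mono' (((measurable_deriv f).pow_const 2).comp measurable_norm).aestronglyMeasurable ?_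
    filter_upwards [h0ae] with y hy
    have h9 := hgbd y hy
    rw [Real.norm_eq_abs]
    rw [abs_of_nonneg (sq_nonneg (deriv f ‖y‖))]
    exact h9
  have hprofile : IntegrableOn (fun y => y ^ (d - 1) * g y) (Set.Ioi (0:ℝ)) :=
    radial_integrableOn d hd0 hgint
  set B : ℝ := ∫ y in Set.Ioi (0:ℝ), y ^ (d-1) * g y with hB
  have hBnn : 0 ≤ B := setIntegral_nonneg measurableSet_Ioi
    (fun y hy => mul_nonneg (pow_nonneg (le_of_lt hy) _) (sq_nonneg _))
  have hgs_nn : 0 ≤ gradSq d φ := integral_nonneg (fun y => sq_nonneg _)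
  have hBle : (d:ℝ) * v * B ≤ gradSq d φ := by
    have hpolar := integral_fun_norm_addHaar (volume : Measure (Rd d)) g
    rw [hdim] at hpolar
    have hmono : ∫ x : Rd d, g ‖x‖ ≤ ∫ x : Rd d, ‖gradient φ x‖^2 := by
      refine integral_mono_ae hgint hint ?_
      filter_upwards [h0ae] with y hy
      exact hgbd y hy
    rw [hpolar] at hmono
    have heq : ∫ y in Set.Ioi (0:ℝ), y ^ (d-1) • g y = B := by
      rw [hB]; simp [smul_eq_mul]
    rw [heq] at hmono
    calc (d:ℝ) * v * B = d • v • B := by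
          rw [nsmul_eq_mul, smul_eq_mul]; ring
      _ ≤ gradSq d φ := hmono
  have hBgs : B ≤ gradSq d φ / ((d:ℝ) * v) := by
    rw [le_div_iff₀ (by positivity)]
    nlinarith
  -- limit at infinity
  have hs0 : (0:ℝ) < ‖x‖ := norm_pos_iff.mpr hx
  set s : ℝ := ‖x‖ with hsdef
  have hftend : Filter.Tendsto (fun S => f S) Filter.atTop (nhds 0) := by
    apply hdecay.comp
    rw [← cobounded_eq_cocompact, ← tendsto_norm_atTop_iff_cobounded]
    have hev : (fun r : ℝ => ‖r • e₀‖) =ᶠ[Filter.atTop] id := by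
      filter_upwards [Filter.eventually_ge_atTop (0:ℝ)] with r hr
      simp [norm_smul, he₀n, abs_of_nonneg hr]
    exact Filter.Tendsto.congr' hev.symm Filter.tendsto_id
  set c : ℝ := s ^ ((2:ℝ) - d) / ((d:ℝ) - 2) with hc
  have hc0 : 0 ≤ c := by
    have := Real.rpow_pos_of_pos hs0 ((2:ℝ) - d)
    positivity
  have key : ∀ ε : ℝ, 0 < ε → |f s| ≤ (ε * B + c / ε) / 2 := by
    intro ε hε
    have main : ∀ S : ℝ, s ≤ S → |f s| ≤ |f S| + (ε * B + c / ε) / 2 := by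
      intro S hS
      have hsubIoi : Set.Ioc s S ⊆ Set.Ioi (0:ℝ) := fun t ht => hs0.trans ht.1
      set bnd : ℝ → ℝ := fun t => (ε * (t ^ (d-1) * g t) + t ^ ((1:ℝ) - d) / ε) / 2 with hbnd
      have hpt : ∀ t : ℝ, 0 < t → |deriv f t| ≤ bnd t := by
        intro t ht
        have hP : (0:ℝ) < t ^ ((d:ℝ) - 1) := Real.rpow_pos_of_pos ht _
        have hPe : (t : ℝ) ^ (d - 1) = t ^ ((d:ℝ) - 1) := by
          rw [← Real.rpow_natCast t (d-1)]
          congr 1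
          rw [Nat.cast_sub (by omega : 1 ≤ d)]
          simp
        have hQ : t ^ ((1:ℝ) - d) = (t ^ ((d:ℝ) - 1))⁻¹ := by
          rw [show (1:ℝ) - d = -((d:ℝ) - 1) by ring, Real.rpow_neg ht.le]
        set q : ℝ := ε * t ^ ((d:ℝ) - 1) with hq
        have hq0 : 0 < q := by positivity
        set a : ℝ := |deriv f t| with ha
        have hkey : 0 ≤ q * a ^ 2 - 2 * a + q⁻¹ := by
          have hnn := mul_nonneg (inv_nonneg.2 hq0.le) (sq_nonneg (q * a - 1))
          have hexp : q⁻¹ * (q * a - 1) ^ 2 = q * a ^ 2 - 2 * a + q⁻¹ := by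
            field_simp
            ring
          linarith [hexp ▸ hnn]
        have hbt : bnd t = (q * a ^ 2 + q⁻¹) / 2 := by
          simp only [hbnd, hg, hPe, hQ, hq, ha]
          rw [sq_abs]
          field_simp
        rw [hbt]
        linarith
      have hint1 : IntegrableOn (fun t => t ^ (d-1) * g t) (Set.Ioc s S) :=
        hprofile.mono_set hsubIoi
      have hcont2 : ContinuousOn (fun t : ℝ => t ^ ((1:ℝ) - d)) (Set.Icc s S) := by
        intro t ht
        exact (Real.continuousAt_rpow_const t _
          (Or.inl (ne_of_gt (hs0.trans_le ht.1)))).continuousWithinAt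
      have hint2 : IntegrableOn (fun t : ℝ => t ^ ((1:ℝ) - d)) (Set.Ioc s S) :=
        (hcont2.integrableOn_Icc).mono_set Set.Ioc_subset_Icc_self
      have hbint : IntegrableOn bnd (Set.Ioc s S) :=
        ((hint1.const_mul ε).add (hint2.div_const ε)).div_const 2
      have hfint : IntegrableOn (deriv f) (Set.Ioc s S) := by
        refine hbint.mono' (measurable_deriv f).aestronglyMeasurable ?_
        filter_upwards [ae_restrict_mem measurableSet_Ioc] with t ht
        rw [Real.norm_eq_abs]
        exact hpt t (hs0.trans ht.1)
      have hii : IntervalIntegrable (deriv f) volume s S := by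
        rw [intervalIntegrable_iff, Set.uIoc_of_le hS]; exact hfint
      have hbii : IntervalIntegrable bnd volume s S := by
        rw [intervalIntegrable_iff, Set.uIoc_of_le hS]; exact hbint
      have hii1 : IntervalIntegrable (fun t => t ^ (d-1) * g t) volume s S := by
        rw [intervalIntegrable_iff, Set.uIoc_of_le hS]; exact hint1
      have hii2 : IntervalIntegrable (fun t : ℝ => t ^ ((1:ℝ) - d)) volume s S := by
        rw [intervalIntegrable_iff, Set.uIoc_of_le hS]; exact hint2
      have hftc : ∫ t in s..S, deriv f t = f S - f s :=
        intervalIntegral.integral_deriv_eq_sub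
          (fun t _ => (hfd t e₀ he₀n).differentiableAt) hii
      have habs : |∫ t in s..S, deriv f t| ≤ ∫ t in s..S, bnd t := by
        calc |∫ t in s..S, deriv f t| ≤ ∫ t in s..S, |deriv f t| :=
              intervalIntegral.abs_integral_le_integral_abs hS
          _ ≤ ∫ t in s..S, bnd t := by
              refine intervalIntegral.integral_mono_on hS hii.abs hbii ?_
              intro t ht
              exact hpt t (hs0.trans_le ht.1)
      have e2 : ∫ t in s..S, t ^ (d-1) * g t ≤ B := by
        rw [intervalIntegral.integral_of_le hS]
        refine setIntegral_mono_set hprofile ?_ (HasSubset.Subset.eventuallyLE hsubIoi)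
        filter_upwards [ae_restrict_mem measurableSet_Ioi] with t ht
        exact mul_nonneg (pow_nonneg (le_of_lt ht) _) (sq_nonneg _)
      have e3 : ∫ t in s..S, t ^ ((1:ℝ) - d) ≤ s ^ ((2:ℝ) - d) / ((d:ℝ) - 2) := by
        rw [integral_rpow (Or.inr ⟨by
            intro hcon
            have : (d:ℝ) = 2 := by linarith
            linarith, by
            intro h0m
            have := (Set.mem_uIcc.mp h0m)
            rcases this with h | h
            · exact absurd h.1 (not_le.mpr hs0)
            · exact absurd h.1 (not_le.mpr (hs0.trans_le hS))⟩)]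
        rw [show (1:ℝ) - (d:ℝ) + 1 = 2 - (d:ℝ) from by ring]
        have hSpos : (0:ℝ) < S ^ ((2:ℝ) - d) := Real.rpow_pos_of_pos (hs0.trans_le hS) _
        have hne : ((2:ℝ) - d) ≠ 0 := by linarith
        have key2 : (S ^ ((2:ℝ) - d) - s ^ ((2:ℝ) - d)) / ((2:ℝ) - d)
            = (s ^ ((2:ℝ) - d) - S ^ ((2:ℝ) - d)) / ((d:ℝ) - 2) := by
          rw [div_eq_div_iff hne (ne_of_gt hd2)]
          ring
        rw [key2]
        gcongr
        linarith
      have hval : ∫ t in s..S, bnd t ≤ (ε * B + c / ε) / 2 := by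
        have e1 : ∫ t in s..S, bnd t
            = ((ε * ∫ t in s..S, t ^ (d-1) * g t) + (∫ t in s..S, t ^ ((1:ℝ) - d)) / ε) / 2 := by
          simp only [hbnd]
          rw [intervalIntegral.integral_div]
          congr 1
          rw [intervalIntegral.integral_add (hii1.const_mul ε) (hii2.div_const ε),
            intervalIntegral.integral_const_mul, intervalIntegral.integral_div]
        rw [e1, hc]
        gcongr
      have hfs : f s = f S - ∫ t in s..S, deriv f t := by rw [hftc]; ring
      calc |f s| = |f S - ∫ t in s..S, deriv f t| := by rw [← hfs]
        _ ≤ |f S| + |∫ t in s..S, deriv f t| := abs_sub _ _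
        _ ≤ |f S| + (ε * B + c / ε) / 2 := by linarith [habs.trans hval]
    have habs0 : Filter.Tendsto (fun S => |f S|) Filter.atTop (nhds 0) := by
      simpa using hftend.abs
    have htend2 : Filter.Tendsto (fun S => |f S| + (ε * B + c / ε) / 2) Filter.atTop
        (nhds (0 + (ε * B + c / ε) / 2)) := habs0.add_const _
    have hle := ge_of_tendsto htend2 ((Filter.eventually_ge_atTop s).mono main)
    linarith [hle]
  have hfsc : |f s| ≤ Real.sqrt B * Real.sqrt c :=
    le_sqrt_mul_sqrt_of_eps (abs_nonneg _) hBnn hc0 key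
  -- final assembly
  have hφx : φ x = f s := hrad x (s • e₀) (by
    rw [norm_smul, he₀n, mul_one, Real.norm_eq_abs, abs_of_pos hs0])
  have hsqB : Real.sqrt B ≤ Real.sqrt (gradSq d φ) / Real.sqrt ((d:ℝ) * v) := by
    have h1 := Real.sqrt_le_sqrt hBgs
    rwa [Real.sqrt_div hgs_nn] at h1
  have hsqc : Real.sqrt c = s ^ (((2:ℝ) - d) / 2) / Real.sqrt ((d:ℝ) - 2) := by
    rw [hc, Real.sqrt_div (Real.rpow_pos_of_pos hs0 _).le]
    congr 1
    rw [Real.sqrt_eq_rpow, ← Real.rpow_mul hs0.le,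
      show ((2:ℝ) - d) * (1 / 2) = ((2:ℝ) - d) / 2 from by ring]
  have hsd2 : (0:ℝ) < Real.sqrt ((d:ℝ) - 2) := Real.sqrt_pos.2 hd2
  have hsdv : (0:ℝ) < Real.sqrt ((d:ℝ) * v) := Real.sqrt_pos.2 (by positivity)
  rw [hφx]
  calc s ^ ((d:ℝ) / 2 - 1) * |f s|
      ≤ s ^ ((d:ℝ) / 2 - 1) * (Real.sqrt B * Real.sqrt c) :=
        mul_le_mul_of_nonneg_left hfsc (Real.rpow_nonneg hs0.le _)
    _ = Real.sqrt B * (s ^ ((d:ℝ) / 2 - 1) * s ^ (((2:ℝ) - d) / 2)) / Real.sqrt ((d:ℝ) - 2) := by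
        rw [hsqc]; ring
    _ = Real.sqrt B / Real.sqrt ((d:ℝ) - 2) := by
        rw [← Real.rpow_add hs0,
          show (d:ℝ) / 2 - 1 + ((2:ℝ) - d) / 2 = 0 from by ring, Real.rpow_zero, mul_one]
    _ ≤ (Real.sqrt (gradSq d φ) / Real.sqrt ((d:ℝ) * v)) / Real.sqrt ((d:ℝ) - 2) := by
        gcongr
    _ = 1 / (Real.sqrt ((d:ℝ) - 2) * Real.sqrt ((d:ℝ) * v)) * Real.sqrt (gradSq d φ) := by
        rw [div_div, one_div, inv_mul_eq_div, mul_comm (Real.sqrt ((d:ℝ) - 2))]
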